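/- Let a, b, c, d, s, t, x be integers with b·s + d·t = 1. Then a + b·x and c + d·x are coprime if and only if d·a − b·c and s·a + t·c + x are coprime. -/
import Mathlib

theorem coprime_shift_iff (a b c d s t x : ℤ) (h : b * s + d * t = 1) :
    IsCoprime (a + b * x) (c + d * x) ↔
      IsCoprime (d * a - b * c) (s * a + t * c + x) := by
  constructor
  · rintro ⟨p, q, hpq⟩
    exact ⟨p * t - q * s, p * b + q * d, by linear_combination hpq + (p * a + q * c) * h⟩
  · rintro ⟨p, q, hpq⟩
    exact ⟨p * d + q * s, q * t - p * b, by linear_combination hpq + q * x * h⟩
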